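/- arXiv:2605.00660 — 6 statements merged into one kernel-verified Lean document; each statement's English description precedes it below -/
import Mathlib

section
/- Let X be a finite set, A : X → X a permutation that is a single cycle of length |X|, and φ : X → ZZ/m. Define F : X × ZZ/m → X × ZZ/m by F(x,y) = (A(x), y + φ(x)), and let S = Σ_{x∈X} φ(x) in ZZ/m. Then F is a single cycle of length |X|·m if and only if gcd of (a lift of) S and m equals 1. -/
theorem stmt0 {X : Type*} [Fintype X] [Nonempty X] {m : ℕ} [NeZero m]
    (A : X → X) (hA : ∀ x y : X, ∃ k : ℕ, A^[k] x = y) (φ : X → ZMod m) :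
    (∀ p q : X × ZMod m,
        ∃ k : ℕ, (fun pr : X × ZMod m => (A pr.1, pr.2 + φ pr.1))^[k] p = q) ↔
      Nat.gcd (∑ x : X, φ x).val m = 1 := by
  classical
  set n := Fintype.card X with hn
  set S : ZMod m := ∑ x : X, φ x with hSdef
  set F : X × ZMod m → X × ZMod m := fun pr => (A pr.1, pr.2 + φ pr.1) with hF
  -- every point is periodic with positive minimal period
  have hpos : ∀ x : X, 0 < Function.minimalPeriod A x := by
    intro x
    obtain ⟨k, hk⟩ := hA (A x) x
    have hper : Function.IsPeriodicPt A (k + 1) x := by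
      show A^[k + 1] x = x
      rw [Function.iterate_succ_apply]; exact hk
    exact hper.minimalPeriod_pos (Nat.succ_pos k)
  -- minimal period is n everywhere
  have hmp : ∀ x : X, Function.minimalPeriod A x = n := by
    intro x
    set r := Function.minimalPeriod A x with hr
    apply le_antisymm
    · have h1 : (Finset.range r).card ≤ (Finset.univ : Finset X).card := by
        apply Finset.card_le_card_of_injOn (fun i => A^[i] x)
        · intro a _; exact Finset.mem_univ _
        · intro a ha b hb hab
          exact Function.iterate_injOn_Iio_minimalPeriod
            (by simpa using ha) (by simpa using hb) hab
      simpa using h1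
    · have h2 : (Finset.univ : Finset X).card ≤ (Finset.range r).card := by
        apply Finset.card_le_card_of_surjOn (fun i => A^[i] x)
        intro y _
        obtain ⟨k, hk⟩ := hA x y
        refine ⟨k % r, by simp; exact Nat.mod_lt _ (hpos x), ?_⟩
        exact (Function.iterate_mod_minimalPeriod_eq.trans hk)
      simpa using h2
  have hid : ∀ x : X, A^[n] x = x := by
    intro x
    have := Function.isPeriodicPt_minimalPeriod A x
    rwa [hmp x] at this
  -- sum over one full cycle equals S, from any starting point
  have hS : ∀ x : X, ∑ i ∈ Finset.range n, φ (A^[i] x) = S := by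
    intro x
    rw [hSdef]
    apply Finset.sum_bij (fun i _ => A^[i] x)
    · intro a _; exact Finset.mem_univ _
    · intro a ha b hb hab
      exact Function.iterate_injOn_Iio_minimalPeriod
        (by simpa [hmp x] using ha) (by simpa [hmp x] using hb) hab
    · intro y _
      obtain ⟨k, hk⟩ := hA x y
      refine ⟨k % n, by simp; exact Nat.mod_lt _ (Fintype.card_pos), ?_⟩
      rw [← hmp x]
      exact (Function.iterate_mod_minimalPeriod_eq.trans hk)
    · intros; rfl
  -- iterate formula for F
  have hiter : ∀ (k : ℕ) (x : X) (y : ZMod m),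
      F^[k] (x, y) = (A^[k] x, y + ∑ i ∈ Finset.range k, φ (A^[i] x)) := by
    intro k
    induction k with
    | zero => intro x y; simp
    | succ k ih =>
      intro x y
      rw [Function.iterate_succ_apply', ih x y]
      show (A (A^[k] x), _ + φ (A^[k] x)) = _
      rw [← Function.iterate_succ_apply' A k x, Finset.sum_range_succ, add_assoc]
  -- block sums
  have hblock : ∀ (x : X) (q : ℕ),
      ∑ i ∈ Finset.range (n * q), φ (A^[i] x) = q • S := by
    intro x q
    induction q with
    | zero => simp
    | succ q ih =>
      rw [Nat.mul_succ, Finset.sum_range_add, ih, succ_nsmul]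
      congr 1
      calc ∑ i ∈ Finset.range n, φ (A^[n * q + i] x)
          = ∑ i ∈ Finset.range n, φ (A^[i] (A^[n * q] x)) := by
            apply Finset.sum_congr rfl
            intro i _
            rw [add_comm, Function.iterate_add_apply]
        _ = S := hS _
  constructor
  · -- transitivity → gcd = 1
    intro h
    obtain ⟨x0⟩ := ‹Nonempty X›
    obtain ⟨k, hk⟩ := h (x0, 0) (x0, 1)
    rw [hiter] at hk
    obtain ⟨h1, h2⟩ := Prod.mk.injEq .. ▸ hk
    have hdvd : n ∣ k := by
      have : Function.IsPeriodicPt A k x0 := h1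
      have := this.minimalPeriod_dvd
      rwa [hmp x0] at this
    obtain ⟨q, rfl⟩ := hdvd
    rw [hblock x0 q, zero_add] at h2
    have hunit : IsUnit S := by
      refine IsUnit.of_mul_eq_one (a := S) (q : ZMod m) ?_
      rw [mul_comm, ← nsmul_eq_mul, h2]
    have := (ZMod.isUnit_iff_coprime S.val m).mp
      (by rwa [ZMod.natCast_rightInverse S])
    exact this
  · -- gcd = 1 → transitivity
    intro hg p q
    have hunit : IsUnit S := by
      have := (ZMod.isUnit_iff_coprime S.val m).mpr hg
      rwa [ZMod.natCast_rightInverse S] at this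
    obtain ⟨x, y⟩ := p
    obtain ⟨x', y'⟩ := q
    obtain ⟨k0, hk0⟩ := hA x x'
    set c0 : ZMod m := ∑ i ∈ Finset.range k0, φ (A^[i] x) with hc0
    set d : ZMod m := y' - (y + c0) with hd
    obtain ⟨b, hb⟩ := hunit.exists_right_inv
    set t : ℕ := (d * b).val with ht
    have htS : (t : ZMod m) * S = d := by
      rw [ht, ZMod.natCast_rightInverse (d * b), mul_assoc, mul_comm b S, hb, mul_one]
    refine ⟨n * t + k0, ?_⟩
    rw [Function.iterate_add_apply, hiter k0 x y, ← hc0, hk0, hiter, hblock]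
    have hx : A^[n * t] x' = x' := by
      rw [Function.iterate_mul]
      exact Function.iterate_fixed (hid x') t
    rw [hx]
    have : y + c0 + t • S = y' := by
      rw [nsmul_eq_mul, htS, hd]; ring
    rw [this]
end

section
/- For any m ≥ 2 and threshold τ ∈ ZZ/m, the map M_τ^Δ : (ZZ/m)^6 → (ZZ/m)^6 defined by M_τ^Δ(z) = z − p_{ρ_τ(z)} is a bijection, where ρ_τ(z) is the least index i ∈ {1,…,6} with z_i = τ, or 6 if none exists, and p_r has its first r coordinates equal to 1 and the rest 0. Its inverse is y ↦ y + p_{ρ_{τ−1}(y)}. -/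
/-- `p_r ∈ (ℤ/m)^6` has its first `r` coordinates equal to `1` and the rest `0`. -/
def pvec (m : ℕ) (r : ℕ) : Fin 6 → ZMod m := fun j => if (j : ℕ) < r then 1 else 0

/-- `ρ_τ(z)`: the least index `i ∈ {1,…,6}` with `z_i = τ`, or `6` if none exists.
(`Fin 6` index `i₀` corresponds to the coordinate `i₀ + 1`.) -/
def rho {m : ℕ} (τ : ZMod m) (z : Fin 6 → ZMod m) : ℕ :=
  if h : (Finset.univ.filter fun i : Fin 6 => z i = τ).Nonempty
  then ((Finset.univ.filter fun i : Fin 6 => z i = τ).min' h : Fin 6).val + 1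
  else 6

/-- `M_τ^Δ(z) = z − p_{ρ_τ(z)}`. -/
def Mdelta {m : ℕ} (τ : ZMod m) (z : Fin 6 → ZMod m) : Fin 6 → ZMod m :=
  z - pvec m (rho τ z)

/-- `M_τ^a(z) = z − p_a` if `ρ_τ(z) < a`, and `z − p_{a−1}` if `ρ_τ(z) ≥ a`. -/
def Mnum {m : ℕ} (τ : ZMod m) (a : ℕ) (z : Fin 6 → ZMod m) : Fin 6 → ZMod m :=
  if rho τ z < a then z - pvec m a else z - pvec m (a - 1)

lemma rho_congr {m : ℕ} {τ τ' : ZMod m} {z w : Fin 6 → ZMod m}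
    (h : ∀ j : Fin 6, (j : ℕ) < rho τ z → (w j = τ' ↔ z j = τ)) :
    rho τ' w = rho τ z := by
  by_cases hS : (Finset.univ.filter fun i : Fin 6 => z i = τ).Nonempty
  · set S := Finset.univ.filter fun i : Fin 6 => z i = τ with hSdef
    set i₀ := S.min' hS with hi₀
    have hrz : rho τ z = (i₀ : ℕ) + 1 := by unfold rho; exact dif_pos hS
    have hi₀S : i₀ ∈ S := S.min'_mem hS
    have hzi₀ : z i₀ = τ := by simpa [hSdef] using hi₀S
    have hwi₀ : w i₀ = τ' := (h i₀ (by omega)).mpr hzi₀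
    have hS' : (Finset.univ.filter fun i : Fin 6 => w i = τ').Nonempty :=
      ⟨i₀, by simp [hwi₀]⟩
    have hmin : (Finset.univ.filter fun i : Fin 6 => w i = τ').min' hS' = i₀ := by
      apply le_antisymm
      · exact Finset.min'_le _ _ (by simp [hwi₀])
      · set j := (Finset.univ.filter fun i : Fin 6 => w i = τ').min' hS' with hj
        have hjle : j ≤ i₀ := Finset.min'_le _ _ (by simp [hwi₀])
        have hjmem : w j = τ' := by
          have := Finset.min'_mem _ hS'
          simpa [hj] using this
        have hzj : z j = τ := (h j (by omega)).mp hjmem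
        exact Finset.min'_le _ _ (by simp [hSdef, hzj])
    simp only [rho, hS', hmin, dif_pos hS, dif_pos hS']
    rw [dif_pos trivial]; exact hrz.symm
  · have hrz : rho τ z = 6 := by simp [rho, hS]
    have hS' : ¬ (Finset.univ.filter fun i : Fin 6 => w i = τ').Nonempty := by
      rintro ⟨j, hj⟩
      simp only [Finset.mem_filter] at hj
      have hzj : z j = τ := (h j (by omega)).mp hj.2
      exact hS ⟨j, by simp [hzj]⟩
    simp only [rho, dif_neg hS, dif_neg hS']

lemma rho_Mdelta {m : ℕ} (τ : ZMod m) (z : Fin 6 → ZMod m) :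
    rho (τ - 1) (Mdelta τ z) = rho τ z := by
  apply rho_congr
  intro j hj
  simp only [Mdelta, Pi.sub_apply, pvec, if_pos hj]
  constructor <;> intro h
  · have := sub_left_injective (G := ZMod m) h; simpa using this
  · rw [h]

lemma rho_inv {m : ℕ} (τ : ZMod m) (y : Fin 6 → ZMod m) :
    rho τ (y + pvec m (rho (τ - 1) y)) = rho (τ - 1) y := by
  apply rho_congr
  intro j hj
  simp only [Pi.add_apply, pvec, if_pos hj]
  exact (eq_sub_iff_add_eq).symm

theorem stmt5 (m : ℕ) (hm : 2 ≤ m) (τ : ZMod m) :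
    Function.Bijective (Mdelta τ) ∧
      (∀ y : Fin 6 → ZMod m, Mdelta τ (y + pvec m (rho (τ - 1) y)) = y) ∧
      (∀ z : Fin 6 → ZMod m, Mdelta τ z + pvec m (rho (τ - 1) (Mdelta τ z)) = z) := by
  have h2 : ∀ y : Fin 6 → ZMod m, Mdelta τ (y + pvec m (rho (τ - 1) y)) = y := by
    intro y
    simp only [Mdelta, rho_inv τ y]
    abel
  have h3 : ∀ z : Fin 6 → ZMod m, Mdelta τ z + pvec m (rho (τ - 1) (Mdelta τ z)) = z := by
    intro z
    rw [rho_Mdelta]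
    simp only [Mdelta]
    abel
  refine ⟨Function.bijective_iff_has_inverse.mpr
    ⟨fun y => y + pvec m (rho (τ - 1) y), fun z => h3 z, fun y => h2 y⟩, h2, h3⟩
end

section
/- For any m ≥ 2, threshold τ ∈ ZZ/m, and integer 2 ≤ a ≤ 6, the map M_τ^a : (ZZ/m)^6 → (ZZ/m)^6 defined by M_τ^a(z) = z − p_a if ρ_τ(z) < a and z − p_{a−1} if ρ_τ(z) ≥ a, is a bijection. -/
lemma rho_lt_iff {m : ℕ} (τ : ZMod m) (z : Fin 6 → ZMod m) (a : ℕ) (ha : a ≤ 6) :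
    rho τ z < a ↔ ∃ i : Fin 6, (i : ℕ) + 1 < a ∧ z i = τ := by
  unfold rho
  split
  · next h =>
    constructor
    · intro hlt
      refine ⟨_, hlt, ?_⟩
      have := Finset.min'_mem _ h
      simpa using this
    · rintro ⟨i, hi, hz⟩
      have hmem : i ∈ Finset.univ.filter fun i : Fin 6 => z i = τ := by simpa using hz
      have := Finset.min'_le _ i hmem
      have : (((Finset.univ.filter fun i : Fin 6 => z i = τ).min' h : Fin 6) : ℕ) ≤ (i : ℕ) :=
        this
      omega
  · next h =>
    constructor
    · intro hlt; omega
    · rintro ⟨i, hi, hz⟩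
      exact absurd ⟨i, by simpa using hz⟩ h

lemma key {m : ℕ} (τ : ZMod m) (a : ℕ) (ha2 : 2 ≤ a) (ha6 : a ≤ 6)
    (z z' : Fin 6 → ZMod m) (hz : rho τ z < a) (hz' : ¬ rho τ z' < a)
    (h : z - pvec m a = z' - pvec m (a - 1)) : False := by
  obtain ⟨i, hi, hzi⟩ := (rho_lt_iff τ z a ha6).1 hz
  apply hz'
  refine (rho_lt_iff τ z' a ha6).2 ⟨i, hi, ?_⟩
  have := congrFun h i
  simp only [Pi.sub_apply, pvec] at this
  rw [if_pos (by omega : (i : ℕ) < a), if_pos (by omega : (i : ℕ) < a - 1)] at this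
  have : z i = z' i := by linear_combination this
  rw [← this, hzi]

theorem stmt6 (m : ℕ) (hm : 2 ≤ m) (τ : ZMod m) (a : ℕ) (ha2 : 2 ≤ a) (ha6 : a ≤ 6) :
    Function.Bijective (Mnum τ a) := by
  haveI : NeZero m := ⟨by omega⟩
  rw [← Finite.injective_iff_bijective]
  intro z z' h
  unfold Mnum at h
  split at h <;> split at h
  · exact sub_left_injective h
  · exact absurd h (by intro h; exact key τ a ha2 ha6 z z' ‹_› ‹_› h)
  · exact absurd h.symm (by intro h; exact key τ a ha2 ha6 z' z ‹_› ‹_› h)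
  · exact sub_left_injective h
end

section
/- Suppose a family of 'layer direction functions' d_t : A_{n,m} × ZZ/n → ZZ/n for t ∈ ZZ/m satisfies: (RF1) for each t and w, κ ↦ d_t(w,κ) is a permutation of ZZ/n; (RF2) for each t and κ, the map P_{t,κ}(w) = w + q_{d_t(w,κ)} is a bijection of A_{n,m}; (RF3) for each κ, the composite R_κ = P_{m−1,κ} ∘ ⋯ ∘ P_{0,κ} is a single cycle on A_{n,m}. Then the arc sets E_κ = {(x, x + e_{d_{σ(x)}(ι_{σ(x)}(x), κ)}) : x ∈ (ZZ/m)^n}, for κ ∈ ZZ/n, partition the arc set of the Cayley digraph Cay((ZZ/m)^n, {e_0,…,e_{n−1}}) into n directed Hamilton cycles. -/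
/-- Standard basis vector `e_i` of `(ℤ/m)^n`. -/
def evec (n m : ℕ) (i : Fin n) : Fin n → ZMod m := fun j => if j = i then 1 else 0

/-- `q_i = e_i − e_{n−1}` for `0 ≤ i ≤ n−2`, and `q_{n−1} = 0`. -/
def qvec (n m : ℕ) (i : Fin n) : Fin n → ZMod m :=
  if (i : ℕ) = n - 1 then 0
  else fun j => (if j = i then 1 else 0) - (if (j : ℕ) = n - 1 then 1 else 0)

/-- The root flat `A_{n,m}`. -/
def RootFlat (n m : ℕ) : Set (Fin n → ZMod m) := {w | ∑ i, w i = 0}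

/-- Layer sum `σ(x) = ∑ x_i`. -/
def sigmaSum {n m : ℕ} (x : Fin n → ZMod m) : ZMod m := ∑ i, x i

/-- `ι_t(x) = x − t·e_{n−1}` applied with `t = σ(x)`. -/
def iotaMap {n m : ℕ} (x : Fin n → ZMod m) : Fin n → ZMod m :=
  fun j => x j - sigmaSum x * (if (j : ℕ) = n - 1 then 1 else 0)

/-- The layer map `P_{t,κ}(w) = w + q_{d_t(w,κ)}`. -/
def layerMap (n m : ℕ) (d : ZMod m → (Fin n → ZMod m) → Fin n → Fin n)
    (t : ZMod m) (κ : Fin n) (w : Fin n → ZMod m) : Fin n → ZMod m :=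
  w + qvec n m (d t w κ)

/-- The return map `R_κ = P_{m−1,κ} ∘ ⋯ ∘ P_{0,κ}`. -/
def returnMap (n m : ℕ) (d : ZMod m → (Fin n → ZMod m) → Fin n → Fin n)
    (κ : Fin n) (w : Fin n → ZMod m) : Fin n → ZMod m :=
  (List.range m).foldl (fun w t => layerMap n m d (t : ZMod m) κ w) w

/-- One step of color `κ` on the Cayley digraph:
`x ↦ x + e_{d_{σ(x)}(ι_{σ(x)} x, κ)}`. -/
def colorStep (n m : ℕ) (d : ZMod m → (Fin n → ZMod m) → Fin n → Fin n)
    (κ : Fin n) (x : Fin n → ZMod m) : Fin n → ZMod m :=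
  x + evec n m (d (sigmaSum x) (iotaMap x) κ)

section Aux

variable {n m : ℕ}

lemma sum_ind (hn : 1 ≤ n) :
    (∑ j : Fin n, (if (j : ℕ) = n - 1 then (1 : ZMod m) else 0)) = 1 := by
  have h : ∀ j : Fin n, ((j : ℕ) = n - 1) = (j = ⟨n - 1, by omega⟩) := by
    intro j
    simp only [eq_iff_iff]
    constructor
    · intro h; exact Fin.ext h
    · intro h; subst h; rfl
  simp only [h]
  simp

lemma sum_evec (i : Fin n) : (∑ j : Fin n, evec n m i j) = 1 := by
  simp [evec]

lemma sigma_add_evec (x : Fin n → ZMod m) (i : Fin n) :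
    sigmaSum (x + evec n m i) = sigmaSum x + 1 := by
  simp only [sigmaSum, Pi.add_apply, Finset.sum_add_distrib, sum_evec]

lemma iota_mem (hn : 1 ≤ n) (x : Fin n → ZMod m) : iotaMap x ∈ RootFlat n m := by
  simp only [RootFlat, iotaMap, Set.mem_setOf_eq, Finset.sum_sub_distrib,
    ← Finset.mul_sum, sum_ind (m := m) hn]
  simp [sigmaSum]

lemma iota_eq_self {x : Fin n → ZMod m} (hx : x ∈ RootFlat n m) : iotaMap x = x := by
  have : sigmaSum x = 0 := hx
  funext j
  simp [iotaMap, this]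

lemma eq_of_sigma_iota {x y : Fin n → ZMod m} (h1 : sigmaSum x = sigmaSum y)
    (h2 : iotaMap x = iotaMap y) : x = y := by
  funext j
  have := congrFun h2 j
  simp only [iotaMap] at this
  have h1' : sigmaSum x * (if (j : ℕ) = n - 1 then (1 : ZMod m) else 0)
      = sigmaSum y * (if (j : ℕ) = n - 1 then (1 : ZMod m) else 0) := by rw [h1]
  linear_combination this + h1'

lemma iota_colorStep (d : ZMod m → (Fin n → ZMod m) → Fin n → Fin n) (κ : Fin n)
    (x : Fin n → ZMod m) :
    iotaMap (colorStep n m d κ x) = layerMap n m d (sigmaSum x) κ (iotaMap x) := by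
  set i := d (sigmaSum x) (iotaMap x) κ with hidef
  have hcs : colorStep n m d κ x = x + evec n m i := rfl
  have hlm : layerMap n m d (sigmaSum x) κ (iotaMap x) = iotaMap x + qvec n m i := rfl
  rw [hcs, hlm]
  funext j
  simp only [iotaMap, Pi.add_apply, sigma_add_evec, evec, qvec]
  by_cases h1 : (i : ℕ) = n - 1
  · rw [if_pos h1]
    have e1 : (if j = i then (1 : ZMod m) else 0) = (if (j : ℕ) = n - 1 then 1 else 0) := by
      by_cases h2 : (j : ℕ) = n - 1
      · rw [if_pos h2, if_pos (show j = i from Fin.ext (by omega))]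
      · rw [if_neg h2, if_neg (show ¬ j = i from fun h => h2 (by rw [h]; exact h1))]
    rw [e1]
    simp only [Pi.zero_apply]
    ring
  · simp only [if_neg h1]
    by_cases h2 : j = i
    · subst h2
      simp only [if_pos, h1, if_false, if_true, eq_self_iff_true]
      ring
    · simp only [h2, if_neg, not_false_iff, if_false]
      ring

lemma sigma_colorStep (d : ZMod m → (Fin n → ZMod m) → Fin n → Fin n) (κ : Fin n)
    (x : Fin n → ZMod m) :
    sigmaSum (colorStep n m d κ x) = sigmaSum x + 1 := by
  simp only [colorStep, sigma_add_evec]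

lemma sigma_iterate (d : ZMod m → (Fin n → ZMod m) → Fin n → Fin n) (κ : Fin n)
    (x : Fin n → ZMod m) (k : ℕ) :
    sigmaSum ((colorStep n m d κ)^[k] x) = sigmaSum x + (k : ZMod m) := by
  induction k with
  | zero => simp
  | succ k ih =>
    rw [Function.iterate_succ_apply', sigma_colorStep, ih]
    push_cast
    ring

lemma iota_iterate (hn : 1 ≤ n) (d : ZMod m → (Fin n → ZMod m) → Fin n → Fin n) (κ : Fin n)
    {w : Fin n → ZMod m} (hw : w ∈ RootFlat n m) (k : ℕ) :
    iotaMap ((colorStep n m d κ)^[k] w)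
      = (List.range k).foldl (fun w t => layerMap n m d (t : ZMod m) κ w) w := by
  induction k with
  | zero => simpa using iota_eq_self hw
  | succ k ih =>
    rw [Function.iterate_succ_apply', iota_colorStep, ih]
    have hσ : sigmaSum ((colorStep n m d κ)^[k] w) = (k : ZMod m) := by
      rw [sigma_iterate]
      have : sigmaSum w = 0 := hw
      rw [this, zero_add]
    rw [hσ]
    simp [List.range_succ]

lemma iterate_m_eq_return (hn : 1 ≤ n) (hm : 1 ≤ m)
    (d : ZMod m → (Fin n → ZMod m) → Fin n → Fin n) (κ : Fin n)
    {w : Fin n → ZMod m} (hw : w ∈ RootFlat n m) :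
    (colorStep n m d κ)^[m] w = returnMap n m d κ w ∧
      (colorStep n m d κ)^[m] w ∈ RootFlat n m := by
  have hmem : (colorStep n m d κ)^[m] w ∈ RootFlat n m := by
    have : sigmaSum ((colorStep n m d κ)^[m] w) = 0 := by
      rw [sigma_iterate]
      have : sigmaSum w = 0 := hw
      rw [this, zero_add, ZMod.natCast_self]
    exact this
  refine ⟨?_, hmem⟩
  have := iota_iterate hn d κ hw m
  rw [iota_eq_self hmem] at this
  rw [this]
  rfl

lemma iterate_mul_eq_return (hn : 1 ≤ n) (hm : 1 ≤ m)
    (d : ZMod m → (Fin n → ZMod m) → Fin n → Fin n) (κ : Fin n)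
    {w : Fin n → ZMod m} (hw : w ∈ RootFlat n m) (j : ℕ) :
    (colorStep n m d κ)^[m * j] w = (returnMap n m d κ)^[j] w ∧
      (returnMap n m d κ)^[j] w ∈ RootFlat n m := by
  induction j with
  | zero => simpa using hw
  | succ j ih =>
    have hstep := iterate_m_eq_return hn hm d κ ih.2
    have harith : m * (j + 1) = m + m * j := by ring
    rw [harith, Function.iterate_add_apply, ih.1, Function.iterate_succ_apply']
    exact ⟨hstep.1, hstep.1 ▸ hstep.2⟩

lemma pow_apply_eq_iterate' {α : Type*} {f : α → α} (hf : Function.Bijective f) (p : ℕ) (x : α) :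
    ((Equiv.ofBijective f hf) ^ p) x = f^[p] x := by
  induction p generalizing x with
  | zero => simp
  | succ p ih =>
    rw [pow_succ, Equiv.Perm.mul_apply, Function.iterate_succ_apply]
    exact ih (f x)

lemma iterate_mul_self {α : Type*} {f : α → α} {p : ℕ} {x : α} (hp : f^[p] x = x) (c : ℕ) :
    f^[p * c] x = x := by
  induction c with
  | zero => simp
  | succ c ih =>
    have : p * (c + 1) = p + p * c := by ring
    rw [this, Function.iterate_add_apply, ih, hp]

lemma reach_symm {α : Type*} [Finite α] {f : α → α} (hf : Function.Bijective f)
    {x y : α} {k : ℕ} (h : f^[k] x = y) : ∃ j, f^[j] y = x := by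
  set e := Equiv.ofBijective f hf with he
  have hp : 0 < orderOf e := orderOf_pos e
  have hfix : f^[orderOf e] x = x := by
    rw [← pow_apply_eq_iterate' hf, pow_orderOf_eq_one]; rfl
  set p := orderOf e
  have hN : p * (k + 1) ≥ k := by nlinarith
  refine ⟨p * (k + 1) - k, ?_⟩
  rw [← h, ← Function.iterate_add_apply]
  have : p * (k + 1) - k + k = p * (k + 1) := by omega
  rw [this]
  exact iterate_mul_self hfix (k + 1)

end Aux

theorem stmt10 (n m : ℕ) (hn : 2 ≤ n) (hm : 2 ≤ m)
    (d : ZMod m → (Fin n → ZMod m) → Fin n → Fin n)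
    (RF1 : ∀ t : ZMod m, ∀ w ∈ RootFlat n m, Function.Bijective (d t w))
    (RF2 : ∀ t : ZMod m, ∀ κ : Fin n,
      Set.BijOn (layerMap n m d t κ) (RootFlat n m) (RootFlat n m))
    (RF3 : ∀ κ : Fin n, ∀ w ∈ RootFlat n m, ∀ w' ∈ RootFlat n m,
      ∃ k : ℕ, (returnMap n m d κ)^[k] w = w') :
    -- the color arc sets partition the Cayley arcs: at each vertex the colors
    -- use each of the `n` generator directions exactly once
    (∀ x : Fin n → ZMod m, Function.Bijective fun κ => d (sigmaSum x) (iotaMap x) κ) ∧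
    -- and each color class is a directed Hamilton cycle: a spanning
    -- permutation acting transitively on all `m^n` vertices
    (∀ κ : Fin n, Function.Bijective (colorStep n m d κ) ∧
      ∀ x y : Fin n → ZMod m, ∃ k : ℕ, (colorStep n m d κ)^[k] x = y) := by
  haveI : NeZero m := ⟨by omega⟩
  have hn1 : 1 ≤ n := by omega
  have hm1 : 1 ≤ m := by omega
  constructor
  · intro x
    exact RF1 (sigmaSum x) (iotaMap x) (iota_mem hn1 x)
  · intro κ
    have hbij : Function.Bijective (colorStep n m d κ) := by
      rw [Finite.injective_iff_bijective.symm]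
      intro x y hxy
      have hσ : sigmaSum x = sigmaSum y := by
        have := congrArg sigmaSum hxy
        rw [sigma_colorStep, sigma_colorStep] at this
        exact add_right_cancel this
      have hι : iotaMap x = iotaMap y := by
        have h2 := congrArg iotaMap hxy
        rw [iota_colorStep, iota_colorStep, hσ] at h2
        exact (RF2 (sigmaSum y) κ).injOn (iota_mem hn1 x) (iota_mem hn1 y) h2
      exact eq_of_sigma_iota hσ hι
    refine ⟨hbij, fun x y => ?_⟩
    -- move x and y into the root flat
    set f := colorStep n m d κ
    set k1 := m - (sigmaSum x).val with hk1
    set k2 := m - (sigmaSum y).val with hk2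
    have hzmem : ∀ z : Fin n → ZMod m, f^[m - (sigmaSum z).val] z ∈ RootFlat n m := by
      intro z
      have : sigmaSum (f^[m - (sigmaSum z).val] z) = 0 := by
        rw [sigma_iterate]
        have hv : ((sigmaSum z).val : ZMod m) = sigmaSum z := by
          rw [ZMod.natCast_val, ZMod.cast_id]
        have hlt : (sigmaSum z).val < m := ZMod.val_lt _
        calc sigmaSum z + ((m - (sigmaSum z).val : ℕ) : ZMod m)
            = (((sigmaSum z).val + (m - (sigmaSum z).val) : ℕ) : ZMod m) := by
              push_cast [hv]; ring
          _ = ((m : ℕ) : ZMod m) := by congr 1; omega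
          _ = 0 := ZMod.natCast_self m
      exact this
    have hx0 : f^[k1] x ∈ RootFlat n m := hzmem x
    have hy0 : f^[k2] y ∈ RootFlat n m := hzmem y
    obtain ⟨j, hj⟩ := RF3 κ _ hx0 _ hy0
    have hmul := (iterate_mul_eq_return hn1 hm1 d κ hx0 j).1
    rw [hj] at hmul
    -- f^[m*j] (f^[k1] x) = f^[k2] y
    have hreach : f^[m * j + k1] x = f^[k2] y := by
      rw [Function.iterate_add_apply, hmul]
    obtain ⟨j2, hj2⟩ := reach_symm hbij (x := y) (k := k2) rfl
    refine ⟨j2 + (m * j + k1), ?_⟩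
    rw [Function.iterate_add_apply, hreach]
    exact hj2
end

section
/- Let W = (ξ_0, …, ξ_{m−1}) be a word of length m in the symbol set {0, Δ, 2, 3, 4, 5, 6}, let τ_0, …, τ_{m−1} ∈ ZZ/m be arbitrary thresholds, and let R_W = M_{τ_{m−1}}^{ξ_{m−1}} ∘ ⋯ ∘ M_{τ_0}^{ξ_0} be the composite of the corresponding prefix maps on (ZZ/m)^6. Let N_0, N_Δ, N_2, …, N_6 be the number of occurrences of each symbol in W. If gcd(N_0, m) = 1 and gcd(N_k − N_Δ, m) = 1 for every k ∈ {2,3,4,5,6}, then R_W is a single cycle of length m^6 on (ZZ/m)^6. -/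
/-- The symbol set `{0, Δ, 2, 3, 4, 5, 6}` encoded as `Fin 7`,
with `0 ↦ 0`, `1 ↦ Δ`, and `a ↦ a` for `2 ≤ a ≤ 6`. -/
def Mstep {m : ℕ} (τ : ZMod m) (ξ : Fin 7) (z : Fin 6 → ZMod m) : Fin 6 → ZMod m :=
  if (ξ : ℕ) = 0 then z
  else if (ξ : ℕ) = 1 then Mdelta τ z
  else Mnum τ (ξ : ℕ) z

/-- The return map `R_W = M_{τ_{m−1}}^{ξ_{m−1}} ∘ ⋯ ∘ M_{τ_0}^{ξ_0}`. -/
def returnWord (m : ℕ) (W : ℕ → Fin 7) (τ : ℕ → ZMod m)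
    (z : Fin 6 → ZMod m) : Fin 6 → ZMod m :=
  (List.range m).foldl (fun z t => Mstep (τ t) (W t) z) z

/-- The number of occurrences of symbol `ξ` in the length-`m` word `W`. -/
def symCount (m : ℕ) (W : ℕ → Fin 7) (ξ : Fin 7) : ℕ :=
  ((Finset.range m).filter fun t => W t = ξ).card

def extZ {m : ℕ} (n : ℕ) (x : Fin n → ZMod m) : ℕ → ZMod m :=
  fun i => if h : i < n then x ⟨i, h⟩ else 0

def dec {m : ℕ} (τ : ZMod m) (ξ : Fin 7) (j : ℕ) (x : ℕ → ZMod m) : ZMod m :=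
  if (ξ : ℕ) = 0 then 0
  else if (ξ : ℕ) = 1 then (if ∀ i < j, x i ≠ τ then 1 else 0)
  else if j + 1 < (ξ : ℕ) then 1
  else if j + 1 = (ξ : ℕ) then (if ∃ i < j, x i = τ then 1 else 0)
  else 0

lemma lt_rho_iff {m : ℕ} (τ : ZMod m) (z : Fin 6 → ZMod m) (k : ℕ) (hk : k < 6) :
    k < rho τ z ↔ ∀ i : Fin 6, (i : ℕ) < k → z i ≠ τ := by
  unfold rho
  split_ifs with h
  · have hmem := Finset.min'_mem _ h
    rw [Finset.mem_filter] at hmem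
    constructor
    · intro hlt i hik hzi
      have h1 : ((Finset.univ.filter fun i : Fin 6 => z i = τ).min' h) ≤ i :=
        Finset.min'_le _ i (by simp [hzi])
      rw [Fin.le_def] at h1
      omega
    · intro hall
      by_contra hc
      push_neg at hc
      exact hall _ (by omega) hmem.2
  · rw [Finset.filter_nonempty_iff] at h
    push_neg at h
    simp only [Finset.mem_univ, true_implies] at h
    constructor
    · intro _ i _; exact h i
    · intro _; omega

lemma mstep_eq {m : ℕ} (τ : ZMod m) (ξ : Fin 7) (z : Fin 6 → ZMod m) :
    Mstep τ ξ z = fun j => z j - dec τ ξ j.val (extZ 6 z) := by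
  have hextA : ∀ k : ℕ, k ≤ 6 →
      ((∀ i < k, extZ 6 z i ≠ τ) ↔ ∀ i : Fin 6, (i:ℕ) < k → z i ≠ τ) := by
    intro k hk
    constructor
    · intro h i hi
      have := h i.val hi
      simpa [extZ, i.isLt] using this
    · intro h i hi
      have h6 : i < 6 := by omega
      simpa [extZ, h6] using h ⟨i, h6⟩ hi
  have hextE : ∀ k : ℕ, k ≤ 6 →
      ((∃ i < k, extZ 6 z i = τ) ↔ ∃ i : Fin 6, (i:ℕ) < k ∧ z i = τ) := by
    intro k hk
    constructor
    · rintro ⟨i, hi, hzi⟩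
      have h6 : i < 6 := by omega
      exact ⟨⟨i, h6⟩, hi, by simpa [extZ, h6] using hzi⟩
    · rintro ⟨i, hi, hzi⟩
      exact ⟨i.val, hi, by simpa [extZ, i.isLt] using hzi⟩
  funext j
  unfold Mstep dec
  rcases Nat.lt_or_ge (ξ : ℕ) 2 with h2 | h2
  · interval_cases h : (ξ : ℕ)
    · simp
    · simp only [Nat.one_ne_zero, if_false, if_true, Nat.zero_ne_one]
      unfold Mdelta
      have hiff : ((j:ℕ) < rho τ z) ↔ ∀ i < (j:ℕ), extZ 6 z i ≠ τ := by
        rw [lt_rho_iff τ z j.val j.isLt]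
        exact (hextA j.val (by omega)).symm
      simp only [Pi.sub_apply, pvec]
      by_cases hc : (j:ℕ) < rho τ z
      · rw [if_pos hc, if_pos (hiff.1 hc)]
      · rw [if_neg hc, if_neg (fun hh => hc (hiff.2 hh))]
  · have h0 : ¬ ((ξ:ℕ) = 0) := by omega
    have h1 : ¬ ((ξ:ℕ) = 1) := by omega
    have h7 : (ξ:ℕ) < 7 := ξ.isLt
    simp only [h0, h1, if_false]
    unfold Mnum
    have hrho : rho τ z < (ξ:ℕ) ↔ ∃ i : Fin 6, (i:ℕ) < (ξ:ℕ) - 1 ∧ z i = τ := by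
      have hiff := lt_rho_iff τ z ((ξ:ℕ) - 1) (by omega)
      constructor
      · intro hr
        by_contra hc
        push_neg at hc
        have : (ξ:ℕ) - 1 < rho τ z := hiff.2 (fun i hi hz => (hc i hi) hz)
        omega
      · rintro ⟨i, hi, hzi⟩
        by_contra hc
        push_neg at hc
        have : (ξ:ℕ) - 1 < rho τ z := by omega
        exact (hiff.1 this) i hi hzi
    rcases lt_trichotomy ((j:ℕ)+1) (ξ:ℕ) with hlt | heq | hgt
    · rw [if_pos hlt]
      by_cases hr : rho τ z < (ξ:ℕ)
      · rw [if_pos hr]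
        simp only [Pi.sub_apply, pvec]
        rw [if_pos (by omega : (j:ℕ) < (ξ:ℕ))]
      · rw [if_neg hr]
        simp only [Pi.sub_apply, pvec]
        rw [if_pos (by omega : (j:ℕ) < (ξ:ℕ) - 1)]
    · rw [if_neg (show ¬((j:ℕ)+1 < (ξ:ℕ)) by omega), if_pos heq]
      by_cases hr : rho τ z < (ξ:ℕ)
      · rw [if_pos hr]
        have hex : ∃ i < (j:ℕ), extZ 6 z i = τ := by
          rw [hextE j.val (by omega)]
          obtain ⟨i, hi, hzi⟩ := hrho.1 hr
          exact ⟨i, by omega, hzi⟩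
        rw [if_pos hex]
        simp only [Pi.sub_apply, pvec]
        rw [if_pos (by omega : (j:ℕ) < (ξ:ℕ))]
      · rw [if_neg hr]
        have hex : ¬ ∃ i < (j:ℕ), extZ 6 z i = τ := by
          rw [hextE j.val (by omega)]
          rintro ⟨i, hi, hzi⟩
          exact hr (hrho.2 ⟨i, by omega, hzi⟩)
        rw [if_neg hex]
        simp only [Pi.sub_apply, pvec]
        rw [if_neg (by omega : ¬ ((j:ℕ) < (ξ:ℕ) - 1))]
    · rw [if_neg (show ¬((j:ℕ)+1 < (ξ:ℕ)) by omega),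
          if_neg (show ¬((j:ℕ)+1 = (ξ:ℕ)) by omega)]
      by_cases hr : rho τ z < (ξ:ℕ)
      · rw [if_pos hr]
        simp only [Pi.sub_apply, pvec]
        rw [if_neg (by omega : ¬ ((j:ℕ) < (ξ:ℕ)))]
      · rw [if_neg hr]
        simp only [Pi.sub_apply, pvec]
        rw [if_neg (by omega : ¬ ((j:ℕ) < (ξ:ℕ) - 1))]
section Count

variable {m : ℕ} [NeZero m]

lemma dec_dep (τ' : ZMod m) (ξ : Fin 7) (j : ℕ) (x y : ℕ → ZMod m)
    (h : ∀ i < j, x i = y i) : dec τ' ξ j x = dec τ' ξ j y := by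
  have h1 : (∀ i < j, x i ≠ τ') ↔ (∀ i < j, y i ≠ τ') := by
    constructor
    · intro hh i hi; rw [← h i hi]; exact hh i hi
    · intro hh i hi; rw [h i hi]; exact hh i hi
  have h2 : (∃ i < j, x i = τ') ↔ (∃ i < j, y i = τ') := by
    constructor
    · rintro ⟨i, hi, e⟩; exact ⟨i, hi, by rw [← h i hi]; exact e⟩
    · rintro ⟨i, hi, e⟩; exact ⟨i, hi, by rw [h i hi]; exact e⟩
  unfold dec
  simp only [h1, h2]

lemma card_allne (τ' : ZMod m) (j : ℕ) :
    (Finset.univ.filter fun x : Fin j → ZMod m => ∀ i < j, extZ j x i ≠ τ').card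
      = (m - 1) ^ j := by
  have heq : (Finset.univ.filter fun x : Fin j → ZMod m => ∀ i < j, extZ j x i ≠ τ')
      = Fintype.piFinset fun _ : Fin j => ({τ'}ᶜ : Finset (ZMod m)) := by
    ext x
    simp only [Finset.mem_filter, Finset.mem_univ, true_and, Fintype.mem_piFinset,
      Finset.mem_compl, Finset.mem_singleton]
    constructor
    · intro h i
      have := h i.val i.isLt
      simpa [extZ, i.isLt] using this
    · intro h i hi
      simpa [extZ, hi] using h ⟨i, hi⟩
  rw [heq, Fintype.card_piFinset]
  simp [Finset.card_compl, ZMod.card]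

lemma cast_pred_pow (j : ℕ) : (((m - 1) ^ j : ℕ) : ZMod m) = (-1 : ZMod m) ^ j := by
  have h1 : 1 ≤ m := Nat.one_le_iff_ne_zero.mpr (NeZero.ne m)
  rw [Nat.cast_pow, Nat.cast_sub h1, ZMod.natCast_self, Nat.cast_one, zero_sub]

lemma card_fun_pi (j : ℕ) : Fintype.card (Fin j → ZMod m) = m ^ j := by
  rw [Fintype.card_fun, ZMod.card, Fintype.card_fin]

lemma inner0 (τ' : ZMod m) (ξ : Fin 7) :
    ∑ x : Fin 0 → ZMod m, dec τ' ξ 0 (extZ 0 x)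
      = if (ξ : ℕ) = 0 then 0 else 1 := by
  have hval : ∀ x : Fin 0 → ZMod m,
      dec τ' ξ 0 (extZ 0 x) = if (ξ : ℕ) = 0 then 0 else 1 := by
    intro x
    unfold dec
    by_cases h0 : (ξ : ℕ) = 0
    · simp [h0]
    by_cases h1' : (ξ : ℕ) = 1
    · simp [h0, h1']
    have h2 : 0 + 1 < (ξ : ℕ) := by have := ξ.isLt; omega
    simp [h0, h1', h2]
  rw [Finset.sum_congr rfl fun x _ => hval x, Finset.sum_const]
  have : Fintype.card (Fin 0 → ZMod m) = 1 := by rw [card_fun_pi]; simp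
  rw [Finset.card_univ, this, one_smul]

lemma innerPos (τ' : ZMod m) (ξ : Fin 7) (j : ℕ) (hj : 1 ≤ j) :
    ∑ x : Fin j → ZMod m, dec τ' ξ j (extZ j x) =
      if (ξ : ℕ) = 1 then (-1 : ZMod m) ^ j
      else if (ξ : ℕ) = j + 1 then -(-1 : ZMod m) ^ j else 0 := by
  have hcard0 : ((Fintype.card (Fin j → ZMod m) : ℕ) : ZMod m) = 0 := by
    rw [card_fun_pi, Nat.cast_pow, ZMod.natCast_self, zero_pow (by omega : j ≠ 0)]
  by_cases h0 : (ξ : ℕ) = 0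
  · have n1 : ¬(ξ : ℕ) = 1 := by omega
    have n2 : ¬(ξ : ℕ) = j + 1 := by omega
    simp [dec, h0, n1, n2]
  by_cases h1' : (ξ : ℕ) = 1
  · have n2 : ¬(ξ : ℕ) = j + 1 := by omega
    have hdec : ∀ x : Fin j → ZMod m, dec τ' ξ j (extZ j x)
        = if (∀ i < j, extZ j x i ≠ τ') then 1 else 0 := by
      intro x; unfold dec; simp [h0, h1']
    rw [Finset.sum_congr rfl fun x _ => hdec x, Finset.sum_boole, card_allne,
      cast_pred_pow, if_pos h1']
  by_cases hlt : j + 1 < (ξ : ℕ)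
  · have n2 : ¬(ξ : ℕ) = j + 1 := by omega
    have hdec : ∀ x : Fin j → ZMod m, dec τ' ξ j (extZ j x) = 1 := by
      intro x; unfold dec; simp [h0, h1', hlt]
    rw [Finset.sum_congr rfl fun x _ => hdec x, Finset.sum_const, Finset.card_univ,
      if_neg h1', if_neg n2]
    rw [nsmul_eq_mul, mul_one, hcard0]
  by_cases heq : (ξ : ℕ) = j + 1
  · have hdec : ∀ x : Fin j → ZMod m, dec τ' ξ j (extZ j x)
        = if (∃ i < j, extZ j x i = τ') then 1 else 0 := by
      intro x; unfold dec; simp [h0, h1', hlt, heq.symm]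
    have hpoint : ∀ x : Fin j → ZMod m,
        (if (∃ i < j, extZ j x i = τ') then (1 : ZMod m) else 0)
          = 1 - (if (∀ i < j, extZ j x i ≠ τ') then 1 else 0) := by
      intro x
      by_cases hc : ∃ i < j, extZ j x i = τ'
      · rw [if_pos hc, if_neg (by
          intro hall
          obtain ⟨i, hi, e⟩ := hc
          exact hall i hi e), sub_zero]
      · push_neg at hc
        rw [if_neg (by push_neg; exact hc), if_pos hc, sub_self]
    rw [Finset.sum_congr rfl fun x _ => (hdec x).trans (hpoint x),
      Finset.sum_sub_distrib, Finset.sum_boole, card_allne, cast_pred_pow,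
      Finset.sum_const, Finset.card_univ, nsmul_eq_mul, mul_one, hcard0,
      if_neg h1', if_pos heq, zero_sub]
  · have hdec : ∀ x : Fin j → ZMod m, dec τ' ξ j (extZ j x) = 0 := by
      intro x
      have n3 : ¬(j + 1 = (ξ : ℕ)) := fun h => heq h.symm
      unfold dec; simp [h0, h1', hlt, n3]
    rw [Finset.sum_congr rfl fun x _ => hdec x, Finset.sum_const, if_neg h1',
      if_neg heq, smul_zero]

end Count
section Tower

variable {m : ℕ} [NeZero m]

def Sstep (F : ℕ → ℕ → (ℕ → ZMod m) → ZMod m) (n : ℕ) (t : ℕ)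
    (z : Fin n → ZMod m) : Fin n → ZMod m :=
  fun j => z j - F t j.val (extZ n z)

def runL (F : ℕ → ℕ → (ℕ → ZMod m) → ZMod m) (n : ℕ) (L : List ℕ)
    (z : Fin n → ZMod m) : Fin n → ZMod m :=
  L.foldl (fun z t => Sstep F n t z) z

def csum (F : ℕ → ℕ → (ℕ → ZMod m) → ZMod m) (n : ℕ) :
    List ℕ → (Fin n → ZMod m) → ZMod m
  | [], _ => 0
  | t :: L, x => F t n (extZ n x) + csum F n L (Sstep F n t x)

variable {F : ℕ → ℕ → (ℕ → ZMod m) → ZMod m}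
variable (hdep : ∀ t j x y, (∀ i < j, x i = y i) → F t j x = F t j y)

include hdep in
lemma sstep_bij (n t : ℕ) : Function.Bijective (Sstep F n t) := by
  rw [← Finite.injective_iff_bijective]
  intro z z' h
  have key : ∀ k : ℕ, ∀ j : Fin n, j.val = k → z j = z' j := by
    intro k
    induction k using Nat.strong_induction_on with
    | _ k IHk =>
      intro j hj
      have hF : F t j.val (extZ n z) = F t j.val (extZ n z') := by
        apply hdep
        intro i hi
        have hin : i < n := lt_trans hi j.isLt
        simp only [extZ, dif_pos hin]
        exact IHk i (hj ▸ hi) ⟨i, hin⟩ rfl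
      have := congrFun h j
      simp only [Sstep, hF] at this
      exact sub_left_injective this
  funext j
  exact key j.val j rfl

lemma runL_cons (n t : ℕ) (L : List ℕ) (z : Fin n → ZMod m) :
    runL F n (t :: L) z = runL F n L (Sstep F n t z) := rfl

include hdep in
lemma runL_bij (n : ℕ) (L : List ℕ) : Function.Bijective (runL F n L) := by
  induction L with
  | nil => exact Function.bijective_id
  | cons t L IHL =>
    have : runL F n (t :: L) = (runL F n L) ∘ (Sstep F n t) := rfl
    rw [this]
    exact IHL.comp (sstep_bij hdep n t)

lemma extZ_snoc_lt (n : ℕ) (x : Fin n → ZMod m) (y : ZMod m) (i : ℕ) (hi : i < n) :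
    extZ (n + 1) (Fin.snoc x y) i = extZ n x i := by
  simp only [extZ, dif_pos hi, dif_pos (Nat.lt_succ_of_lt hi)]
  have : (⟨i, Nat.lt_succ_of_lt hi⟩ : Fin (n+1)) = Fin.castSucc ⟨i, hi⟩ := rfl
  rw [this, Fin.snoc_castSucc]

include hdep in
lemma sstep_snoc (n t : ℕ) (x : Fin n → ZMod m) (y : ZMod m) :
    Sstep F (n + 1) t (Fin.snoc x y) =
      Fin.snoc (Sstep F n t x) (y - F t n (extZ n x)) := by
  funext j
  refine Fin.lastCases ?_ ?_ j
  · simp only [Sstep, Fin.snoc_last, Fin.val_last]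
    congr 1
    exact hdep t n _ _ (fun i hi => extZ_snoc_lt n x y i hi)
  · intro i
    simp only [Sstep, Fin.snoc_castSucc, Fin.coe_castSucc]
    congr 1
    exact hdep t i.val _ _ (fun k hk => extZ_snoc_lt n x y k (lt_trans hk i.isLt))

include hdep in
lemma runL_snoc (n : ℕ) (L : List ℕ) (x : Fin n → ZMod m) (y : ZMod m) :
    runL F (n + 1) L (Fin.snoc x y) =
      Fin.snoc (runL F n L x) (y - csum F n L x) := by
  induction L generalizing x y with
  | nil => simp [runL, csum]
  | cons t L IHL =>
    rw [runL_cons, sstep_snoc hdep, IHL, runL_cons, csum, sub_sub]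

include hdep in
lemma csum_sum (n : ℕ) (L : List ℕ) :
    ∑ x : Fin n → ZMod m, csum F n L x =
      (L.map (fun t => ∑ x : Fin n → ZMod m, F t n (extZ n x))).sum := by
  induction L with
  | nil => simp [csum]
  | cons t L IHL =>
    simp only [csum, List.map_cons, List.sum_cons, Finset.sum_add_distrib]
    congr 1
    rw [← IHL]
    exact Function.Bijective.sum_comp (sstep_bij hdep n t) _

lemma orbit_facts {α : Type*} [Fintype α] [DecidableEq α] (R : α → α)
    (hinj : Function.Injective R) (x : α) (htr : ∀ y, ∃ k, R^[k] x = y) :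
    R^[Fintype.card α] x = x ∧
      Function.Bijective (fun i : Fin (Fintype.card α) => R^[(i : ℕ)] x) := by
  have aux : ∀ a b : ℕ, a ≤ b → R^[a] x = R^[b] x → R^[b - a] x = x := by
    intro a b hab h
    apply Function.Injective.iterate hinj a
    rw [← Function.iterate_add_apply, Nat.add_sub_cancel' hab, ← h]
  have hper : x ∈ Function.periodicPts R := by
    obtain ⟨a, _, b, _, hab, heq⟩ :=
      Finset.exists_ne_map_eq_of_card_lt_of_maps_to
        (s := Finset.range (Fintype.card α + 1)) (t := Finset.univ)
        (by simp) (fun k _ => Finset.mem_univ (R^[k] x))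
    rcases Nat.lt_or_ge a b with h | h
    · exact Function.mk_mem_periodicPts (by omega) (aux a b (le_of_lt h) heq)
    · have h' : b < a := by omega
      exact Function.mk_mem_periodicPts (by omega) (aux b a (le_of_lt h') heq.symm)
  set p := Function.minimalPeriod R x with hp
  have hpp : 0 < p := Function.minimalPeriod_pos_of_mem_periodicPts hper
  have hbij : Function.Bijective (fun i : Fin p => R^[(i : ℕ)] x) := by
    constructor
    · intro i j hij
      by_contra hne
      have key : ∀ a b : ℕ, a < b → b < p → R^[a] x = R^[b] x → False := by
        intro a b h1 h2 h
        have := aux a b (le_of_lt h1) h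
        exact Function.not_isPeriodicPt_of_pos_of_lt_minimalPeriod
          (by omega) (by omega) this
      rcases Nat.lt_or_ge (i : ℕ) (j : ℕ) with h | h
      · exact key i j h j.isLt hij
      · have h' : (j : ℕ) < (i : ℕ) := by
          rcases Nat.lt_or_ge (j : ℕ) (i : ℕ) with h' | h'
          · exact h'
          · exact absurd (Fin.ext (le_antisymm h' h)) hne
        exact key j i h' i.isLt hij.symm
    · intro y
      obtain ⟨k, hk⟩ := htr y
      refine ⟨⟨k % p, Nat.mod_lt _ hpp⟩, ?_⟩
      show R^[k % p] x = y
      rw [hp, Function.iterate_mod_minimalPeriod_eq]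
      exact hk
  have hcard : p = Fintype.card α := by
    have := Fintype.card_of_bijective hbij
    simpa using this
  have hpx : R^[p] x = x := by rw [hp]; exact Function.iterate_minimalPeriod
  rw [hcard] at hpx hbij
  exact ⟨hpx, hbij⟩

include hdep in
theorem tower (n : ℕ) (L : List ℕ)
    (hsum : ∀ j < n,
      IsUnit ((L.map (fun t => ∑ x : Fin j → ZMod m, F t j (extZ j x))).sum)) :
    ∀ z z' : Fin n → ZMod m, ∃ k, (runL F n L)^[k] z = z' := by
  induction n with
  | zero =>
    intro z z'
    exact ⟨0, funext fun i => i.elim0⟩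
  | succ n IH =>
    have IH' := IH (fun j hj => hsum j (by omega))
    intro z z'
    set Rn := runL F n L with hRn
    set R := runL F (n + 1) L with hR
    have hiter : ∀ (k : ℕ) (x : Fin n → ZMod m) (y : ZMod m),
        R^[k] (Fin.snoc x y) =
          Fin.snoc (Rn^[k] x) (y - ∑ i ∈ Finset.range k, csum F n L (Rn^[i] x)) := by
      intro k
      induction k with
      | zero => intro x y; simp
      | succ k IHk =>
        intro x y
        rw [Function.iterate_succ_apply', IHk, hR, runL_snoc hdep,
          Finset.sum_range_succ, sub_sub, Function.iterate_succ_apply' Rn k x]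
    obtain ⟨k₀, hk₀⟩ := IH' (Fin.init z) (Fin.init z')
    have horb := orbit_facts Rn (runL_bij hdep n L).injective (Fin.init z')
      (IH' (Fin.init z'))
    have hu : IsUnit (∑ x : Fin n → ZMod m, csum F n L x) := by
      rw [csum_sum hdep]
      exact hsum n (Nat.lt_succ_self n)
    set s := ∑ x : Fin n → ZMod m, csum F n L x with hs
    have hblock : ∀ y : ZMod m,
        R^[Fintype.card (Fin n → ZMod m)] (Fin.snoc (Fin.init z') y) = Fin.snoc (Fin.init z') (y - s) := by
      intro y
      rw [hiter (Fintype.card (Fin n → ZMod m)) (Fin.init z') y, horb.1]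
      have hsum' : (∑ i ∈ Finset.range (Fintype.card (Fin n → ZMod m)),
          csum F n L (Rn^[i] (Fin.init z'))) = s := by
        rw [hs, ← Fin.sum_univ_eq_sum_range]
        exact Function.Bijective.sum_comp horb.2 _
      rw [hsum']
    have hrep : ∀ (j : ℕ) (y : ZMod m),
        R^[j * Fintype.card (Fin n → ZMod m)] (Fin.snoc (Fin.init z') y) = Fin.snoc (Fin.init z') (y - j • s) := by
      intro j
      induction j with
      | zero => intro y; simp
      | succ j IHj =>
        intro y
        have : (j + 1) * Fintype.card (Fin n → ZMod m) = j * Fintype.card (Fin n → ZMod m) + Fintype.card (Fin n → ZMod m) := by ring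
        rw [this, Function.iterate_add_apply, hblock y, IHj (y - s)]
        congr 1
        rw [succ_nsmul, sub_sub, add_comm (j • s) s]
    -- reach the base point
    set y₁ := z (Fin.last n) - ∑ i ∈ Finset.range k₀, csum F n L (Rn^[i] (Fin.init z))
      with hy₁
    have hreach : R^[k₀] z = Fin.snoc (Fin.init z') y₁ := by
      conv_lhs => rw [← Fin.snoc_init_self z]
      rw [hiter k₀ (Fin.init z) (z (Fin.last n)), hk₀]
    obtain ⟨u, huu⟩ := hu
    set j := ((y₁ - z' (Fin.last n)) * ↑u⁻¹).val with hj
    have hjs : j • s = y₁ - z' (Fin.last n) := by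
      rw [nsmul_eq_mul, hj, ZMod.natCast_val, ZMod.cast_id, ← huu,
        Units.inv_mul_cancel_right]
    refine ⟨j * Fintype.card (Fin n → ZMod m) + k₀, ?_⟩
    rw [Function.iterate_add_apply, hreach, hrep j y₁]
    have : y₁ - j • s = z' (Fin.last n) := by
      rw [hjs, sub_sub_cancel]
    rw [this, Fin.snoc_init_self]
lemma listSumRange {M : Type*} [AddCommMonoid M] (g : ℕ → M) (n : ℕ) :
    ((List.range n).map g).sum = ∑ t ∈ Finset.range n, g t := by
  induction n with
  | zero => simp
  | succ n IH =>
    rw [List.range_succ, List.map_append, List.sum_append, Finset.sum_range_succ, IH]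
    simp

lemma isUnit_intCast_of_gcd {m : ℕ} [NeZero m] (d : ℤ) (h : Int.gcd d m = 1) :
    IsUnit ((d : ZMod m)) := by
  obtain ⟨a, b, hab⟩ := Int.isCoprime_iff_gcd_eq_one.mpr h
  have hcast : ((a * d + b * m : ℤ) : ZMod m) = 1 := by rw [hab]; exact Int.cast_one
  push_cast at hcast
  rw [ZMod.natCast_self, mul_zero, add_zero] at hcast
  exact IsUnit.of_mul_eq_one _ (by rw [mul_comm]; exact hcast)


theorem stmt16 (m : ℕ) (hm : 2 ≤ m) (W : ℕ → Fin 7) (τ : ℕ → ZMod m)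
    (hN0 : Nat.gcd (symCount m W 0) m = 1)
    (hNk : ∀ k : Fin 7, 2 ≤ (k : ℕ) →
      Int.gcd ((symCount m W k : ℤ) - (symCount m W 1 : ℤ)) m = 1) :
    ∀ z z' : Fin 6 → ZMod m, ∃ j : ℕ, (returnWord m W τ)^[j] z = z' := by
  haveI : NeZero m := ⟨by omega⟩
  intro z z'
  have hdep : ∀ t j x y, (∀ i < j, x i = y i) →
      (fun t j x => dec (τ t) (W t) j x) t j x = (fun t j x => dec (τ t) (W t) j x) t j y :=
    fun t j x y h => dec_dep (τ t) (W t) j x y h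
  have hrun : returnWord m W τ = runL (fun t j x => dec (τ t) (W t) j x) 6 (List.range m) := by
    have hfun : (fun (z0 : Fin 6 → ZMod m) t => Mstep (τ t) (W t) z0)
        = (fun (z0 : Fin 6 → ZMod m) t =>
            Sstep (fun t j x => dec (τ t) (W t) j x) 6 t z0) := by
      funext z0 t
      exact mstep_eq (τ t) (W t) z0
    unfold returnWord runL
    rw [hfun]
  rw [hrun]
  refine tower hdep 6 (List.range m) ?_ z z'
  intro j hj
  rw [listSumRange]
  rcases Nat.eq_zero_or_pos j with hj0 | hjpos
  · subst hj0
    have hpt : ∀ t, (∑ x : Fin 0 → ZMod m, dec (τ t) (W t) 0 (extZ 0 x))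
        = 1 - (if W t = (0 : Fin 7) then (1 : ZMod m) else 0) := by
      intro t
      rw [inner0]
      by_cases h : W t = (0 : Fin 7)
      · rw [if_pos (show ((W t : ℕ) = 0) by rw [h]; rfl), if_pos h, sub_self]
      · rw [if_neg (show ¬((W t : ℕ) = 0) from fun hv => h (by
          apply Fin.ext; rw [hv]; rfl)), if_neg h, sub_zero]
    rw [Finset.sum_congr rfl fun t _ => hpt t, Finset.sum_sub_distrib,
      Finset.sum_const, Finset.sum_boole]
    have e1 : ((Finset.range m).card) • (1 : ZMod m) = 0 := by
      rw [Finset.card_range, nsmul_eq_mul, mul_one, ZMod.natCast_self]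
    rw [e1, zero_sub, IsUnit.neg_iff]
    exact (ZMod.isUnit_iff_coprime _ m).mpr hN0
  · set k : Fin 7 := ⟨j + 1, by omega⟩ with hk
    have hkval : (k : ℕ) = j + 1 := rfl
    have hpt : ∀ t, (∑ x : Fin j → ZMod m, dec (τ t) (W t) j (extZ j x))
        = (-1 : ZMod m) ^ j *
          ((if W t = (1 : Fin 7) then (1 : ZMod m) else 0) - (if W t = k then 1 else 0)) := by
      intro t
      rw [innerPos (τ t) (W t) j hjpos]
      by_cases h1 : (W t : ℕ) = 1
      · have e1 : W t = (1 : Fin 7) := by apply Fin.ext; rw [h1]; rfl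
        have e2 : ¬(W t = k) := fun hh => by rw [hh, hkval] at h1; omega
        rw [if_pos h1, if_pos e1, if_neg e2]
        ring
      · by_cases h2 : (W t : ℕ) = j + 1
        · have e1 : ¬(W t = (1 : Fin 7)) := fun hh => h1 (by rw [hh]; rfl)
          have e2 : W t = k := by apply Fin.ext; rw [h2, hkval]
          rw [if_neg h1, if_pos h2, if_neg e1, if_pos e2]
          ring
        · have e1 : ¬(W t = (1 : Fin 7)) := fun hh => h1 (by rw [hh]; rfl)
          have e2 : ¬(W t = k) := fun hh => h2 (by rw [hh, hkval])
          rw [if_neg h1, if_neg h2, if_neg e1, if_neg e2]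
          ring
    rw [Finset.sum_congr rfl fun t _ => hpt t, ← Finset.mul_sum,
      Finset.sum_sub_distrib, Finset.sum_boole, Finset.sum_boole]
    apply IsUnit.mul
    · exact (isUnit_one.neg).pow j
    · have hg := hNk k (by rw [hkval]; omega)
      have hcast : ((symCount m W 1 : ZMod m)) - (symCount m W k : ZMod m)
          = (((symCount m W 1 : ℤ) - (symCount m W k : ℤ) : ℤ) : ZMod m) := by
        push_cast
        rfl
      show IsUnit ((symCount m W 1 : ZMod m) - (symCount m W k : ZMod m))
      rw [hcast]
      apply isUnit_intCast_of_gcd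
      have : ((symCount m W 1 : ℤ) - (symCount m W k : ℤ))
          = -(((symCount m W k : ℤ) - (symCount m W 1 : ℤ))) := by ring
      rw [this, Int.neg_gcd]
      exact hg
end Tower
end

section
/- Fix m ≥ 2 and a word W of length m in {0, Δ, 2, …, 6} with thresholds τ_0, …, τ_{m−1}, and let R_W be the composite prefix return map on (ZZ/m)^6. The projection of R_W to the first coordinate is the translation y ↦ y − (m − N_0), where N_0 is the number of occurrences of the symbol 0 in W. Consequently, if R_W is a single cycle on (ZZ/m)^6, then gcd(N_0, m) = 1, and in particular N_0 ≥ 1. -/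
lemma pvec_zero_of_pos {m r : ℕ} (hr : 0 < r) : pvec m r 0 = 1 := by
  simp [pvec, hr]

lemma Mstep_zero {m : ℕ} (τ : ZMod m) (ξ : Fin 7) (z : Fin 6 → ZMod m) :
    Mstep τ ξ z 0 = z 0 - (if (ξ : ℕ) = 0 then 0 else 1) := by
  unfold Mstep
  by_cases h0 : (ξ : ℕ) = 0
  · simp [h0]
  · simp only [h0, if_false]
    by_cases h1 : (ξ : ℕ) = 1
    · have hr : 0 < rho τ z := by
        unfold rho; split <;> omega
      simp [h1, Mdelta, pvec_zero_of_pos hr]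
    · simp only [h1, if_false, Mnum]
      have h2 : 2 ≤ (ξ : ℕ) := by omega
      split
      · simp [pvec_zero_of_pos (by omega : 0 < (ξ : ℕ))]
      · simp [pvec_zero_of_pos (by omega : 0 < (ξ : ℕ) - 1)]

lemma fold_fst {m : ℕ} (W : ℕ → Fin 7) (τ : ℕ → ZMod m) (L : List ℕ)
    (z : Fin 6 → ZMod m) :
    (L.foldl (fun z t => Mstep (τ t) (W t) z) z) 0
      = z 0 - ((L.filter fun t => decide ¬ W t = 0).length : ZMod m) := by
  induction L generalizing z with
  | nil => simp
  | cons a l ih =>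
    rw [List.foldl_cons, ih, List.filter_cons, Mstep_zero]
    by_cases h : W a = 0
    · have hv : (W a : ℕ) = 0 := by simp [h]
      simp [h, hv]
    · have hv : ¬ (W a : ℕ) = 0 := fun hc => h (Fin.ext hc)
      simp only [hv, if_false]
      have hb : (decide ¬ W a = 0) = true := by simp [h]
      simp only [hb, if_true, List.length_cons]
      push_cast
      ring

theorem stmt17 (m : ℕ) (hm : 2 ≤ m) (W : ℕ → Fin 7) (τ : ℕ → ZMod m) :
    (∀ z : Fin 6 → ZMod m,
        returnWord m W τ z 0 = z 0 - ((m - symCount m W 0 : ℕ) : ZMod m)) ∧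
      ((∀ z z' : Fin 6 → ZMod m, ∃ j : ℕ, (returnWord m W τ)^[j] z = z') →
        Nat.gcd (symCount m W 0) m = 1 ∧ 1 ≤ symCount m W 0) := by
  have hcount : ((List.range m).filter fun t => decide ¬ W t = 0).length
      = m - symCount m W 0 := by
    have h1 : ((List.range m).filter fun t => decide (W t = 0)).length
        = symCount m W 0 := rfl
    have h2 := List.length_eq_length_filter_add (l := List.range m)
      (fun t => decide (W t = 0))
    simp only [List.length_range] at h2
    have heq : (fun t => !decide (W t = 0)) = (fun t => decide ¬ W t = 0) := by
      funext t; simp [decide_not]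
    rw [heq, h1] at h2
    omega
  have hfst : ∀ z : Fin 6 → ZMod m,
      returnWord m W τ z 0 = z 0 - ((m - symCount m W 0 : ℕ) : ZMod m) := by
    intro z
    rw [returnWord, fold_fst, hcount]
  refine ⟨hfst, fun hcyc => ?_⟩
  have hle : symCount m W 0 ≤ m := by
    have := Finset.card_filter_le (Finset.range m) (fun t => W t = 0)
    simpa [symCount] using this
  set c : ZMod m := ((m - symCount m W 0 : ℕ) : ZMod m) with hc
  have hcN : c = -(symCount m W 0 : ZMod m) := by
    rw [hc, Nat.cast_sub hle, ZMod.natCast_self, zero_sub]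
  have hit : ∀ (j : ℕ) (z : Fin 6 → ZMod m),
      ((returnWord m W τ)^[j] z) 0 = z 0 - (j : ℕ) * c := by
    intro j
    induction j with
    | zero => intro z; simp
    | succ n ih =>
      intro z
      rw [Function.iterate_succ_apply', hfst, ih]
      push_cast
      ring
  obtain ⟨j, hj⟩ := hcyc (fun _ => 0) (fun _ => -1)
  have hj0 : ((returnWord m W τ)^[j] (fun _ => 0)) 0 = -1 := by rw [hj]
  rw [hit j] at hj0
  have h1 : (j : ZMod m) * c = 1 := by
    have : (0 : ZMod m) - (j : ZMod m) * c = -1 := hj0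
    linear_combination -this
  haveI : NeZero m := ⟨by omega⟩
  have hmul : ((symCount m W 0 : ℕ) : ZMod m) * (-(j : ZMod m)) = 1 := by
    rw [hcN] at h1
    linear_combination h1
  have hunit : IsUnit ((symCount m W 0 : ℕ) : ZMod m) :=
    IsUnit.of_mul_eq_one _ hmul
  have hcop : Nat.Coprime (symCount m W 0) m :=
    (ZMod.isUnit_iff_coprime _ m).mp hunit
  refine ⟨hcop, ?_⟩
  by_contra h
  have h0 : symCount m W 0 = 0 := by omega
  rw [h0] at hcop
  simp [Nat.Coprime] at hcop
  omega
end
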